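/- Let Δ be a simplicial complex with subcomplexes Δ' and Σ. Then the pair of spaces (|Δ| − |Σ|, |Δ'| − |Σ|) is homotopy equivalent as a pair to (|Sd(Δ−Σ)|, |Sd(Δ'−Σ)|), where Sd(X−Σ) denotes the full subcomplex of the barycentric subdivision Sd(X) on vertices that are not barycenters of faces of Σ. -/

import Mathlib

/-- An abstract simplicial complex on a vertex type `V`. -/
def IsComplex {V : Type*} (Δ : Set (Finset V)) : Prop :=
  ∀ F ∈ Δ, ∀ G ⊆ F, G ∈ Δ

/-- The barycentric subdivision of `Δ`: vertices are the nonempty faces of `Δ` (their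
barycenters), faces are chains of such faces. -/
def Sd {V : Type*} (Δ : Set (Finset V)) : Set (Finset (Finset V)) :=
  {C | (∀ F ∈ C, F ∈ Δ ∧ F.Nonempty) ∧ ∀ F ∈ C, ∀ G ∈ C, F ⊆ G ∨ G ⊆ F}

/-- The full subcomplex `Sd(Δ - Σ)` of `Sd(Δ)` on the vertices that are not barycenters
of faces of `Σ`. -/
def SdMinus {V : Type*} (Δ S : Set (Finset V)) : Set (Finset (Finset V)) :=
  {C | C ∈ Sd Δ ∧ ∀ F ∈ C, F ∉ S}

/-- The geometric realization of a simplicial complex on a vertex type `V`. -/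
def realize {V : Type*} (Δ : Set (Finset V)) : Set (V → ℝ) :=
  {p | (∀ v, 0 ≤ p v) ∧ ∃ F ∈ Δ, (∀ v, p v ≠ 0 → v ∈ F) ∧ ∑ v ∈ F, p v = 1}

/-- A homotopy equivalence of pairs `(X, A) ≃ (Y, B)`: maps of pairs in both directions
whose composites are homotopic to the identities through maps of pairs. -/
def IsPairHomotopyEquiv {X Y : Type*} [TopologicalSpace X] [TopologicalSpace Y]
    (A : Set X) (B : Set Y) : Prop :=
  ∃ (f : C(X, Y)) (g : C(Y, X)), Set.MapsTo f A B ∧ Set.MapsTo g B A ∧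
    Nonempty (ContinuousMap.HomotopyWith (g.comp f) (ContinuousMap.id X)
      (fun h => Set.MapsTo h A A)) ∧
    Nonempty (ContinuousMap.HomotopyWith (f.comp g) (ContinuousMap.id Y)
      (fun h => Set.MapsTo h B B))

open Finset
namespace PHES
open scoped Classical

variable {n : ℕ}

noncomputable def fsupp {α : Type*} [Fintype α] (p : α → ℝ) : Finset α :=
  univ.filter (fun a => p a ≠ 0)

lemma mem_fsupp {α : Type*} [Fintype α] {p : α → ℝ} {a : α} : a ∈ fsupp p ↔ p a ≠ 0 := by
  simp [fsupp]

/-- max over the complement of `F`, with default `0`. -/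
noncomputable def Mx (x : Fin n → ℝ) (F : Finset (Fin n)) : ℝ := Fᶜ.fold max 0 x

noncomputable def w (x : Fin n → ℝ) (F : Finset (Fin n)) : ℝ :=
  if h : F.Nonempty then max 0 (F.inf' h x - Mx x F) else 0

noncomputable def sdM (x : Fin n → ℝ) (F : Finset (Fin n)) : ℝ := F.card * w x F

noncomputable def gmap (p : Finset (Fin n) → ℝ) (v : Fin n) : ℝ :=
  ∑ F : Finset (Fin n), p F * (if v ∈ F then ((F.card : ℝ))⁻¹ else 0)

noncomputable def predT (T : Finset ℝ) (a : ℝ) : ℝ :=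
  if h : (T.filter (· < a)).Nonempty then (T.filter (· < a)).max' h else 0

lemma telescope : ∀ (T : Finset ℝ),
    ∑ a ∈ T, (a - predT T a) = if h : T.Nonempty then T.max' h else 0 := by
  intro T
  induction T using Finset.strongInduction with
  | _ T ih =>
    rcases T.eq_empty_or_nonempty with rfl | hT
    · simp
    · set m := T.max' hT with hm
      have hmem := T.max'_mem hT
      have h1 : ∑ a ∈ T, (a - predT T a) = (m - predT T m) + ∑ a ∈ T.erase m, (a - predT T a) :=
        (Finset.add_sum_erase _ _ hmem).symm
      have hpred : ∀ a ∈ T.erase m, predT T a = predT (T.erase m) a := by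
        intro a ha
        have : T.filter (· < a) = (T.erase m).filter (· < a) := by
          ext b
          simp only [mem_filter, mem_erase]
          constructor
          · rintro ⟨hb, hba⟩
            refine ⟨⟨fun hbm => ?_, hb⟩, hba⟩
            subst hbm
            exact absurd (lt_of_lt_of_le hba (T.le_max' a (mem_of_mem_erase ha))) (lt_irrefl _)
          · rintro ⟨⟨_, hb⟩, hba⟩; exact ⟨hb, hba⟩
        unfold predT; rw [this]
      have hfm : T.filter (· < m) = T.erase m := by
        ext b
        simp only [mem_filter, mem_erase]
        constructor
        · rintro ⟨hb, hbm⟩; exact ⟨ne_of_lt hbm, hb⟩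
        · rintro ⟨hb, hbT⟩; exact ⟨hbT, lt_of_le_of_ne (T.le_max' b hbT) hb⟩
      have hpm : predT T m = if h : (T.erase m).Nonempty then (T.erase m).max' h else 0 := by
        unfold predT; rw [hfm]
      rw [h1, Finset.sum_congr rfl (fun a ha => by rw [hpred a ha] : ∀ a ∈ T.erase m, a - predT T a = a - predT (T.erase m) a),
        ih (T.erase m) (Finset.erase_ssubset hmem), hpm, dif_pos hT]
      rcases (T.erase m).eq_empty_or_nonempty with he | he
      · rw [he]; simp [hm]
      · rw [dif_pos he]; ring


/-- superlevel set -/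
noncomputable def L (x : Fin n → ℝ) (a : ℝ) : Finset (Fin n) := univ.filter (fun u => a ≤ x u)

noncomputable def thr (x : Fin n → ℝ) (F : Finset (Fin n)) : ℝ :=
  if h : F.Nonempty then F.inf' h x else 0

lemma Mx_nonneg (x : Fin n → ℝ) (F : Finset (Fin n)) : 0 ≤ Mx x F :=
  (Finset.le_fold_max _).2 (Or.inl le_rfl)

lemma le_Mx {x : Fin n → ℝ} {F : Finset (Fin n)} {u : Fin n} (hu : u ∉ F) : x u ≤ Mx x F :=
  (Finset.le_fold_max _).2 (Or.inr ⟨u, by simpa using hu, le_rfl⟩)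

lemma w_nonneg (x : Fin n → ℝ) (F : Finset (Fin n)) : 0 ≤ w x F := by
  unfold w; split
  · exact le_max_left _ _
  · exact le_rfl

lemma sdM_nonneg (x : Fin n → ℝ) (F : Finset (Fin n)) : 0 ≤ sdM x F :=
  mul_nonneg (Nat.cast_nonneg _) (w_nonneg x F)

lemma w_ne_zero_char {x : Fin n → ℝ} {F : Finset (Fin n)} (hw : w x F ≠ 0) :
    ∃ h : F.Nonempty, 0 < F.inf' h x ∧ Mx x F < F.inf' h x ∧ F = L x (F.inf' h x) := by
  unfold w at hw
  rcases Finset.eq_empty_or_nonempty F with rfl | h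
  · simp at hw
  rw [dif_pos h] at hw
  have hlt : Mx x F < F.inf' h x := by
    by_contra hle
    exact hw (max_eq_left (sub_nonpos.2 (not_lt.1 hle)))
  have hpos : 0 < F.inf' h x := lt_of_le_of_lt (Mx_nonneg x F) hlt
  refine ⟨h, hpos, hlt, ?_⟩
  ext u
  simp only [L, mem_filter, mem_univ, true_and]
  constructor
  · intro hu; exact Finset.inf'_le _ hu
  · intro hu
    by_contra huF
    have := le_Mx (x := x) huF
    linarith

lemma w_eq_of_nonempty {x : Fin n → ℝ} {F : Finset (Fin n)} (h : F.Nonempty) :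
    w x F = max 0 (F.inf' h x - Mx x F) := dif_pos h

lemma L_nonempty {x : Fin n → ℝ} {a : ℝ} (ha : a ∈ univ.image x) : (L x a).Nonempty := by
  rcases Finset.mem_image.1 ha with ⟨u, _, rfl⟩
  exact ⟨u, by simp [L]⟩

lemma inf'_L {x : Fin n → ℝ} {a : ℝ} (ha : a ∈ univ.image x) (h : (L x a).Nonempty) :
    (L x a).inf' h x = a := by
  rcases Finset.mem_image.1 ha with ⟨u, _, rfl⟩
  apply le_antisymm
  · exact Finset.inf'_le _ (by simp [L])
  · exact Finset.le_inf' _ _ (fun b hb => by simpa [L] using hb)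

/-- For `a` in the threshold set of `v`, `Mx x (L x a)` is the predecessor in that set. -/
lemma Mx_L_eq_predT {x : Fin n → ℝ} (hx : ∀ v, 0 ≤ x v) {v : Fin n} {a : ℝ}
    (ha : a ∈ (univ.image x).filter (fun b => 0 < b ∧ b ≤ x v)) :
    Mx x (L x a) = predT ((univ.image x).filter (fun b => 0 < b ∧ b ≤ x v)) a := by
  set T := (univ.image x).filter (fun b => 0 < b ∧ b ≤ x v) with hTdef
  obtain ⟨haim, hapos, hav⟩ : a ∈ univ.image x ∧ 0 < a ∧ a ≤ x v := by
    simpa [hTdef] using ha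
  have hcompl : ∀ u, u ∈ (L x a)ᶜ ↔ x u < a := by
    intro u; simp [L, not_le]
  rcases (T.filter (· < a)).eq_empty_or_nonempty with he | hne
  · have h0 : Mx x (L x a) ≤ 0 := by
      apply (Finset.fold_max_le _).2
      refine ⟨le_rfl, fun u hu => ?_⟩
      by_contra hgt
      have hxu : 0 < x u := lt_of_not_ge hgt
      have hua : x u < a := (hcompl u).1 hu
      have : x u ∈ T.filter (· < a) := by
        simp only [hTdef, mem_filter, mem_image]
        exact ⟨⟨⟨u, mem_univ u, rfl⟩, hxu, le_of_lt (lt_of_lt_of_le hua hav)⟩, hua⟩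
      rw [he] at this; exact absurd this (notMem_empty _)
    unfold predT
    rw [dif_neg (by rw [he]; exact not_nonempty_empty)]
    exact le_antisymm h0 (Mx_nonneg x _)
  · set b := (T.filter (· < a)).max' hne with hb
    have hbmem := (T.filter (· < a)).max'_mem hne
    obtain ⟨hbT, hba⟩ : b ∈ T ∧ b < a := Finset.mem_filter.1 hbmem
    obtain ⟨hbim, hbpos, _⟩ : b ∈ univ.image x ∧ 0 < b ∧ b ≤ x v := by simpa [hTdef] using hbT
    rcases Finset.mem_image.1 hbim with ⟨u, _, hub⟩
    unfold predT
    rw [dif_pos hne]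
    apply le_antisymm
    · apply (Finset.fold_max_le _).2
      refine ⟨le_of_lt hbpos, fun u' hu' => ?_⟩
      have hua : x u' < a := (hcompl u').1 hu'
      rcases le_or_gt (x u') 0 with h0 | h0
      · exact le_trans h0 (le_of_lt hbpos)
      · apply Finset.le_max'
        simp only [hTdef, mem_filter, mem_image]
        exact ⟨⟨⟨u', mem_univ u', rfl⟩, h0, le_of_lt (lt_of_lt_of_le hua hav)⟩, hua⟩
    · apply (Finset.le_fold_max _).2
      exact Or.inr ⟨u, by simp [hcompl, hub, hba], le_of_eq hub.symm⟩

lemma key (x : Fin n → ℝ) (hx : ∀ v, 0 ≤ x v) (v : Fin n) :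
    ∑ F ∈ univ.filter (fun F => v ∈ F), w x F = x v := by
  set T := (univ.image x).filter (fun b => 0 < b ∧ b ≤ x v) with hTdef
  have h1 : ∑ F ∈ univ.filter (fun F => v ∈ F), w x F
      = ∑ F ∈ univ.filter (fun F => v ∈ F ∧ w x F ≠ 0), w x F := by
    symm
    apply Finset.sum_subset
    · intro F hF
      simp only [mem_filter] at hF ⊢
      exact ⟨hF.1, hF.2.1⟩
    · intro F hF hF2
      simp only [mem_filter, not_and, mem_univ, true_and] at hF hF2
      by_contra hne
      exact (hF2 hF) hne
  have h2 : ∑ F ∈ univ.filter (fun F => v ∈ F ∧ w x F ≠ 0), w x F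
      = ∑ a ∈ T, (a - predT T a) := by
    apply Finset.sum_nbij' (i := fun F => thr x F) (j := fun a => L x a)
    · intro F hF
      simp only [mem_filter, mem_univ, true_and] at hF
      obtain ⟨hne, hpos, hlt, hL⟩ := w_ne_zero_char hF.2
      obtain ⟨u, hu, hiu⟩ := Finset.exists_mem_eq_inf' hne x
      simp only [hTdef, mem_filter, mem_image, thr, dif_pos hne]
      exact ⟨⟨u, mem_univ u, hiu.symm⟩, hpos, Finset.inf'_le _ hF.1⟩
    · intro a ha
      obtain ⟨haim, hapos, hav⟩ : a ∈ univ.image x ∧ 0 < a ∧ a ≤ x v := by simpa [hTdef] using ha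
      have hLne := L_nonempty (x := x) haim
      simp only [mem_filter, mem_univ, true_and]
      constructor
      · simp [L, hav]
      · rw [w_eq_of_nonempty hLne, inf'_L haim hLne, Mx_L_eq_predT hx ha]
        have : predT T a < a := by
          unfold predT
          split
          · rename_i h
            have := (T.filter (· < a)).max'_mem h
            simp only [mem_filter] at this
            exact this.2
          · exact hapos
        have hgt : (0:ℝ) < a - predT T a := by linarith
        rw [max_eq_right (le_of_lt hgt)]
        exact ne_of_gt hgt
    · intro F hF
      simp only [mem_filter, mem_univ, true_and] at hF
      obtain ⟨hne, hpos, hlt, hL⟩ := w_ne_zero_char hF.2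
      rw [thr, dif_pos hne]
      exact hL.symm
    · intro a ha
      obtain ⟨haim, hapos, hav⟩ : a ∈ univ.image x ∧ 0 < a ∧ a ≤ x v := by simpa [hTdef] using ha
      have hLne := L_nonempty (x := x) haim
      rw [thr, dif_pos hLne, inf'_L haim hLne]
    · intro F hF
      simp only [mem_filter, mem_univ, true_and] at hF
      obtain ⟨hne, hpos, hlt, hL⟩ := w_ne_zero_char hF.2
      have hFT : thr x F ∈ T := by
        obtain ⟨u, hu, hiu⟩ := Finset.exists_mem_eq_inf' hne x
        simp only [hTdef, mem_filter, mem_image, thr, dif_pos hne]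
        exact ⟨⟨u, mem_univ u, hiu.symm⟩, hpos, Finset.inf'_le _ hF.1⟩
      have hthr : thr x F = F.inf' hne x := dif_pos hne
      have hLF : L x (thr x F) = F := by rw [hthr]; exact hL.symm
      have hMx := Mx_L_eq_predT hx (x := x) (v := v) (a := thr x F) (by rwa [← hTdef])
      rw [hLF, hthr] at hMx
      rw [w_eq_of_nonempty hne, hthr, hMx]
      exact max_eq_right (by rw [← hMx]; linarith)
  rw [h1, h2, telescope T]
  split
  · rename_i h
    have hmax : T.max' h = x v := by
      apply le_antisymm
      · have := T.max'_mem h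
        simp only [hTdef, mem_filter] at this
        exact this.2.2
      · apply Finset.le_max'
        have hxv : 0 < x v := by
          obtain ⟨a, ha⟩ := h
          simp only [hTdef, mem_filter] at ha
          exact lt_of_lt_of_le ha.2.1 ha.2.2
        simp only [hTdef, mem_filter, mem_image]
        exact ⟨⟨v, mem_univ v, rfl⟩, hxv, le_rfl⟩
    exact hmax
  · rename_i h
    by_contra hne
    have hxv : 0 < x v := lt_of_le_of_ne (hx v) hne
    exact h ⟨x v, by simp only [hTdef, mem_filter, mem_image]; exact ⟨⟨v, mem_univ v, rfl⟩, hxv, le_rfl⟩⟩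


lemma gmap_sdM (x : Fin n → ℝ) (hx : ∀ v, 0 ≤ x v) : gmap (sdM x) = x := by
  funext v
  unfold gmap
  have h1 : ∀ F : Finset (Fin n),
      sdM x F * (if v ∈ F then ((F.card : ℝ))⁻¹ else 0) = if v ∈ F then w x F else 0 := by
    intro F
    by_cases hv : v ∈ F
    · have hc : (F.card : ℝ) ≠ 0 := by
        simp only [ne_eq, Nat.cast_eq_zero, Finset.card_eq_zero]
        exact Finset.ne_empty_of_mem hv
      rw [if_pos hv, if_pos hv, sdM]
      field_simp
    · rw [if_neg hv, if_neg hv, mul_zero]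
  rw [Finset.sum_congr rfl (fun F _ => h1 F), ← Finset.sum_filter]
  exact key x hx v

lemma sum_sdM (x : Fin n → ℝ) (hx : ∀ v, 0 ≤ x v) : ∑ F : Finset (Fin n), sdM x F = ∑ v, x v := by
  have h1 : ∀ F : Finset (Fin n), sdM x F = ∑ v : Fin n, if v ∈ F then w x F else 0 := by
    intro F
    rw [Finset.sum_ite_mem, Finset.univ_inter, Finset.sum_const, nsmul_eq_mul, sdM]
  rw [Finset.sum_congr rfl (fun F _ => h1 F), Finset.sum_comm]
  apply Finset.sum_congr rfl
  intro v _
  rw [← Finset.sum_filter]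
  exact key x hx v

lemma chain_max : ∀ (C : Finset (Finset (Fin n))), C.Nonempty →
    (∀ F ∈ C, ∀ G ∈ C, F ⊆ G ∨ G ⊆ F) → ∃ M ∈ C, ∀ F ∈ C, F ⊆ M := by
  intro C
  induction C using Finset.cons_induction with
  | empty => intro h; exact absurd h (by simp)
  | cons a s ha ih =>
    intro _ hch
    rcases s.eq_empty_or_nonempty with rfl | hs
    · exact ⟨a, by simp, by simp⟩
    · obtain ⟨M, hM, hMmax⟩ := ih hs (fun F hF G hG =>
        hch F (Finset.mem_cons_of_mem hF) G (Finset.mem_cons_of_mem hG))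
      rcases hch a (Finset.mem_cons_self a s) M (Finset.mem_cons_of_mem hM) with h | h
      · refine ⟨M, Finset.mem_cons_of_mem hM, fun F hF => ?_⟩
        rcases Finset.mem_cons.1 hF with rfl | hF'
        · exact h
        · exact hMmax F hF'
      · refine ⟨a, Finset.mem_cons_self a s, fun F hF => ?_⟩
        rcases Finset.mem_cons.1 hF with rfl | hF'
        · exact Finset.Subset.refl _
        · exact Finset.Subset.trans (hMmax F hF') h

lemma ite_inv_nonneg (v : Fin n) (F : Finset (Fin n)) :
    (0:ℝ) ≤ (if v ∈ F then ((F.card : ℝ))⁻¹ else 0) := by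
  split
  · positivity
  · exact le_rfl

lemma gmap_nonneg {p : Finset (Fin n) → ℝ} (hp : ∀ F, 0 ≤ p F) (v : Fin n) : 0 ≤ gmap p v :=
  Finset.sum_nonneg (fun F _ => mul_nonneg (hp F) (ite_inv_nonneg v F))

lemma gmap_pos {p : Finset (Fin n) → ℝ} (hp : ∀ F, 0 ≤ p F) {M : Finset (Fin n)}
    (hM : p M ≠ 0) {v : Fin n} (hv : v ∈ M) : 0 < gmap p v := by
  have hMc : (0 : ℝ) < (M.card : ℝ) := by
    have := Finset.card_pos.2 ⟨v, hv⟩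
    exact_mod_cast this
  have hterm : 0 < p M * (if v ∈ M then ((M.card : ℝ))⁻¹ else 0) := by
    rw [if_pos hv]
    exact mul_pos (lt_of_le_of_ne (hp M) (Ne.symm hM)) (inv_pos.2 hMc)
  apply lt_of_lt_of_le hterm
  exact Finset.single_le_sum (f := fun F => p F * (if v ∈ F then ((F.card : ℝ))⁻¹ else 0))
    (fun F _ => mul_nonneg (hp F) (ite_inv_nonneg v F)) (Finset.mem_univ M)

lemma gmap_zero {p : Finset (Fin n) → ℝ} {M : Finset (Fin n)}
    (hmax : ∀ F, p F ≠ 0 → F ⊆ M) {v : Fin n} (hv : v ∉ M) : gmap p v = 0 := by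
  apply Finset.sum_eq_zero
  intro F _
  by_cases hF : p F = 0
  · rw [hF, zero_mul]
  · rw [if_neg (fun hvF => hv (hmax F hF hvF)), mul_zero]

lemma gmap_sum {p : Finset (Fin n) → ℝ} (hne : ∀ F, p F ≠ 0 → F.Nonempty) :
    ∑ v, gmap p v = ∑ F : Finset (Fin n), p F := by
  unfold gmap
  rw [Finset.sum_comm]
  apply Finset.sum_congr rfl
  intro F _
  rw [← Finset.mul_sum, Finset.sum_ite_mem, Finset.univ_inter, Finset.sum_const, nsmul_eq_mul]
  by_cases hF : p F = 0
  · rw [hF, zero_mul]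
  · have hc : (F.card : ℝ) ≠ 0 := by
      simp only [ne_eq, Nat.cast_eq_zero, Finset.card_eq_zero]
      exact (hne F hF).ne_empty
    field_simp

lemma gmap_update {p : Finset (Fin n) → ℝ} (M : Finset (Fin n)) (v : Fin n) :
    gmap (Function.update p M 0) v
      = gmap p v - p M * (if v ∈ M then ((M.card : ℝ))⁻¹ else 0) := by
  have h : gmap p v - gmap (Function.update p M 0) v
      = p M * (if v ∈ M then ((M.card : ℝ))⁻¹ else 0) := by
    unfold gmap
    rw [← Finset.sum_sub_distrib, Finset.sum_eq_single M]
    · rw [Function.update_self, zero_mul, sub_zero]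
    · intro F _ hF
      rw [Function.update_of_ne hF, sub_self]
    · intro h; exact absurd (Finset.mem_univ M) h
  linarith


def Chainy (p : Finset (Fin n) → ℝ) : Prop :=
  (∀ F, 0 ≤ p F) ∧ (∀ F, p F ≠ 0 → F.Nonempty) ∧
  (∀ F G, p F ≠ 0 → p G ≠ 0 → F ⊆ G ∨ G ⊆ F)

lemma exists_max_face {p : Finset (Fin n) → ℝ} (hc : Chainy p) (hne : (fsupp p).Nonempty) :
    ∃ M, p M ≠ 0 ∧ ∀ F, p F ≠ 0 → F ⊆ M := by
  obtain ⟨M, hM, hmax⟩ := chain_max (fsupp p) hne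
    (fun F hF G hG => hc.2.2 F G (mem_fsupp.1 hF) (mem_fsupp.1 hG))
  exact ⟨M, mem_fsupp.1 hM, fun F hF => hmax F (mem_fsupp.2 hF)⟩

lemma exists_gmap_ne {p : Finset (Fin n) → ℝ} (hc : Chainy p) (hne : (fsupp p).Nonempty) :
    ∃ v, gmap p v ≠ 0 := by
  obtain ⟨M, hM, _⟩ := exists_max_face hc hne
  obtain ⟨v, hv⟩ := hc.2.1 M hM
  exact ⟨v, ne_of_gt (gmap_pos hc.1 hM hv)⟩

lemma pM_eq {p : Finset (Fin n) → ℝ} (hc : Chainy p) {M : Finset (Fin n)}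
    (hM : p M ≠ 0) (hmax : ∀ F, p F ≠ 0 → F ⊆ M) :
    p M = M.card * (M.inf' (hc.2.1 M hM) (gmap p)) := by
  have hMne := hc.2.1 M hM
  have hc0 : (0 : ℝ) < (M.card : ℝ) := by exact_mod_cast Finset.card_pos.2 hMne
  have hlow : ∀ u ∈ M, p M * ((M.card : ℝ))⁻¹ ≤ gmap p u := by
    intro u hu
    have := Finset.single_le_sum (f := fun F => p F * (if u ∈ F then ((F.card : ℝ))⁻¹ else 0))
      (fun F _ => mul_nonneg (hc.1 F) (ite_inv_nonneg u F)) (Finset.mem_univ M)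
    simpa only [gmap, if_pos hu] using this
  have hex : ∃ v ∈ M, gmap p v = p M * ((M.card : ℝ))⁻¹ := by
    have key : ∀ v ∈ M, (∀ F, p F ≠ 0 → F ≠ M → v ∉ F) → gmap p v = p M * ((M.card : ℝ))⁻¹ := by
      intro v hv hno
      unfold gmap
      rw [Finset.sum_eq_single M]
      · rw [if_pos hv]
      · intro F _ hFM
        by_cases hpF : p F = 0
        · rw [hpF, zero_mul]
        · rw [if_neg (hno F hpF hFM), mul_zero]
      · intro h; exact absurd (Finset.mem_univ M) h
    rcases ((fsupp p).erase M).eq_empty_or_nonempty with he | hne'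
    · obtain ⟨v, hv⟩ := hMne
      refine ⟨v, hv, key v hv (fun F hpF hFM => ?_)⟩
      exact absurd (Finset.mem_erase.2 ⟨hFM, mem_fsupp.2 hpF⟩) (by rw [he]; exact notMem_empty _)
    · obtain ⟨G, hG, hGmax⟩ := chain_max ((fsupp p).erase M) hne'
        (fun F hF G' hG' => hc.2.2 F G' (mem_fsupp.1 (mem_of_mem_erase hF))
          (mem_fsupp.1 (mem_of_mem_erase hG')))
      have hGM : G ⊂ M := by
        refine Finset.ssubset_iff_subset_ne.2 ⟨hmax G (mem_fsupp.1 (mem_of_mem_erase hG)), ?_⟩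
        exact (Finset.mem_erase.1 hG).1
      obtain ⟨v, hvM, hvG⟩ := Finset.exists_of_ssubset hGM
      refine ⟨v, hvM, key v hvM (fun F hpF hFM hvF => ?_)⟩
      exact hvG (hGmax F (Finset.mem_erase.2 ⟨hFM, mem_fsupp.2 hpF⟩) hvF)
  obtain ⟨v, hvM, hveq⟩ := hex
  have hinf : M.inf' hMne (gmap p) = p M * ((M.card : ℝ))⁻¹ := by
    apply le_antisymm
    · rw [← hveq]; exact Finset.inf'_le _ hvM
    · exact Finset.le_inf' _ _ hlow
  rw [hinf]
  field_simp

lemma chainy_update {p : Finset (Fin n) → ℝ} (hc : Chainy p) (M : Finset (Fin n)) :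
    Chainy (Function.update p M 0) := by
  have hval : ∀ F, Function.update p M 0 F ≠ 0 → p F ≠ 0 := by
    intro F hF
    by_cases hFM : F = M
    · subst hFM; rw [Function.update_self] at hF; exact absurd rfl hF
    · rwa [Function.update_of_ne hFM] at hF
  refine ⟨fun F => ?_, fun F hF => hc.2.1 F (hval F hF),
    fun F G hF hG => hc.2.2 F G (hval F hF) (hval G hG)⟩
  by_cases hFM : F = M
  · subst hFM; rw [Function.update_self]
  · rw [Function.update_of_ne hFM]; exact hc.1 F

lemma fsupp_update {p : Finset (Fin n) → ℝ} (M : Finset (Fin n)) :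
    fsupp (Function.update p M 0) = (fsupp p).erase M := by
  ext F
  simp only [mem_fsupp, Finset.mem_erase]
  by_cases hFM : F = M
  · subst hFM; simp [Function.update_self]
  · simp [Function.update_of_ne hFM, hFM]

lemma gmap_inj : ∀ (N : ℕ) (p q : Finset (Fin n) → ℝ),
    (fsupp p).card + (fsupp q).card ≤ N →
    Chainy p → Chainy q → gmap p = gmap q → p = q := by
  intro N
  induction N with
  | zero =>
    intro p q hcard hp hq _
    have hps : fsupp p = ∅ := Finset.card_eq_zero.1 (by omega)
    have hqs : fsupp q = ∅ := Finset.card_eq_zero.1 (by omega)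
    funext F
    have h1 : p F = 0 := by
      by_contra h
      exact absurd (mem_fsupp.2 h) (by rw [hps]; exact notMem_empty _)
    have h2 : q F = 0 := by
      by_contra h
      exact absurd (mem_fsupp.2 h) (by rw [hqs]; exact notMem_empty _)
    rw [h1, h2]
  | succ N ih =>
    intro p q hcard hp hq hg
    rcases (fsupp p).eq_empty_or_nonempty with hps | hps
    · -- p is identically zero, so gmap q = 0, so q is zero.
      have hp0 : ∀ F, p F = 0 := by
        intro F
        by_contra h
        exact absurd (mem_fsupp.2 h) (by rw [hps]; exact notMem_empty _)
      have hq0 : fsupp q = ∅ := by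
        rcases (fsupp q).eq_empty_or_nonempty with h | h
        · exact h
        · obtain ⟨v, hv⟩ := exists_gmap_ne hq h
          exfalso
          apply hv
          rw [← hg]
          exact Finset.sum_eq_zero (fun F _ => by rw [hp0 F, zero_mul])
      funext F
      rw [hp0 F]
      by_contra h
      exact absurd (mem_fsupp.2 (fun h' => h h'.symm)) (by rw [hq0]; exact notMem_empty _)
    rcases (fsupp q).eq_empty_or_nonempty with hqs | hqs
    · have hq0 : ∀ F, q F = 0 := by
        intro F
        by_contra h
        exact absurd (mem_fsupp.2 h) (by rw [hqs]; exact notMem_empty _)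
      obtain ⟨v, hv⟩ := exists_gmap_ne hp hps
      exfalso
      apply hv
      rw [hg]
      exact Finset.sum_eq_zero (fun F _ => by rw [hq0 F, zero_mul])
    · obtain ⟨Mp, hMp, hmaxp⟩ := exists_max_face hp hps
      obtain ⟨Mq, hMq, hmaxq⟩ := exists_max_face hq hqs
      have hMeq : Mp = Mq := by
        ext v
        constructor
        · intro hv
          by_contra hvq
          have := gmap_pos hp.1 hMp hv
          rw [hg] at this
          rw [gmap_zero hmaxq hvq] at this
          exact lt_irrefl _ this
        · intro hv
          by_contra hvp
          have := gmap_pos hq.1 hMq hv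
          rw [← hg] at this
          rw [gmap_zero hmaxp hvp] at this
          exact lt_irrefl _ this
      subst hMeq
      have hpq : p Mp = q Mp := by
        rw [pM_eq hp hMp hmaxp, pM_eq hq hMq hmaxq, hg]
      set p' := Function.update p Mp 0 with hp'
      set q' := Function.update q Mp 0 with hq'
      have hg' : gmap p' = gmap q' := by
        funext v
        rw [hp', hq', gmap_update, gmap_update, hg, hpq]
      have hcard' : (fsupp p').card + (fsupp q').card ≤ N := by
        rw [hp', hq', fsupp_update, fsupp_update]
        have h1 : Mp ∈ fsupp p := mem_fsupp.2 hMp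
        have h2 : Mp ∈ fsupp q := mem_fsupp.2 hMq
        rw [Finset.card_erase_of_mem h1, Finset.card_erase_of_mem h2]
        have c1 : 1 ≤ (fsupp p).card := Finset.card_pos.2 ⟨Mp, h1⟩
        have c2 : 1 ≤ (fsupp q).card := Finset.card_pos.2 ⟨Mp, h2⟩
        omega
      have heq := ih p' q' hcard' (chainy_update hp Mp) (chainy_update hq Mp) hg'
      funext F
      by_cases hFM : F = Mp
      · subst hFM; exact hpq
      · have := congrFun heq F
        rwa [hp', hq', Function.update_of_ne hFM, Function.update_of_ne hFM] at this


/-! ### realize and membership lemmas -/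

lemma sum_fsupp {α : Type*} [Fintype α] (p : α → ℝ) {F : Finset α} (h : ∀ a, p a ≠ 0 → a ∈ F) :
    ∑ a ∈ F, p a = ∑ a, p a := by
  apply Finset.sum_subset (Finset.subset_univ F)
  intro a _ ha
  by_contra h0
  exact ha (h a h0)

lemma realize_iff {V : Type*} [Fintype V] {Δ : Set (Finset V)} (hΔ : IsComplex Δ)
    {p : V → ℝ} : p ∈ realize Δ ↔ (∀ v, 0 ≤ p v) ∧ fsupp p ∈ Δ ∧ ∑ v, p v = 1 := by
  constructor
  · rintro ⟨h0, F, hF, hsub, hsum⟩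
    refine ⟨h0, hΔ F hF (fsupp p) (fun a ha => hsub a (mem_fsupp.1 ha)), ?_⟩
    rw [← sum_fsupp p hsub]
    exact hsum
  · rintro ⟨h0, hF, hsum⟩
    exact ⟨h0, fsupp p, hF, fun v hv => mem_fsupp.2 hv,
      by rw [sum_fsupp p (fun a ha => mem_fsupp.2 ha)]; exact hsum⟩

lemma isComplex_sdMinus {Δ S : Set (Finset (Fin n))} : IsComplex (SdMinus Δ S) := by
  rintro C ⟨⟨h1, h2⟩, h3⟩ D hD
  exact ⟨⟨fun F hF => h1 F (hD hF), fun F hF G hG => h2 F (hD hF) G (hD hG)⟩,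
    fun F hF => h3 F (hD hF)⟩

lemma fsupp_nonempty {α : Type*} [Fintype α] {p : α → ℝ} (h : ∑ a, p a = 1) :
    (fsupp p).Nonempty := by
  rcases (fsupp p).eq_empty_or_nonempty with he | hne
  · exfalso
    have : ∀ a, p a = 0 := by
      intro a
      by_contra h0
      exact absurd (mem_fsupp.2 h0) (by rw [he]; exact notMem_empty _)
    rw [Finset.sum_congr rfl (fun a _ => this a)] at h
    simpa using h
  · exact hne

/-! ### facts about `w` supports -/

lemma w_subset_fsupp {x : Fin n → ℝ} {F : Finset (Fin n)} (hw : w x F ≠ 0) : F ⊆ fsupp x := by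
  obtain ⟨h, hpos, hlt, hL⟩ := w_ne_zero_char hw
  intro v hv
  have : F.inf' h x ≤ x v := Finset.inf'_le _ hv
  exact mem_fsupp.2 (ne_of_gt (lt_of_lt_of_le hpos this))

lemma w_chain {x : Fin n → ℝ} {F G : Finset (Fin n)} (hF : w x F ≠ 0) (hG : w x G ≠ 0) :
    F ⊆ G ∨ G ⊆ F := by
  obtain ⟨h1, _, _, hL1⟩ := w_ne_zero_char hF
  obtain ⟨h2, _, _, hL2⟩ := w_ne_zero_char hG
  rcases le_total (F.inf' h1 x) (G.inf' h2 x) with h | h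
  · right
    rw [hL1, hL2]
    intro u hu
    simp only [L, mem_filter, mem_univ, true_and] at hu ⊢
    exact le_trans h hu
  · left
    rw [hL1, hL2]
    intro u hu
    simp only [L, mem_filter, mem_univ, true_and] at hu ⊢
    exact le_trans h hu

lemma Mx_fsupp {x : Fin n → ℝ} (hx : ∀ v, 0 ≤ x v) : Mx x (fsupp x) = 0 := by
  apply le_antisymm _ (Mx_nonneg x _)
  apply (Finset.fold_max_le _).2
  refine ⟨le_rfl, fun u hu => ?_⟩
  have : u ∉ fsupp x := by simpa using hu
  rw [mem_fsupp, not_not] at this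
  rw [this]

lemma w_fsupp_pos {x : Fin n → ℝ} (hx : ∀ v, 0 ≤ x v) (hne : (fsupp x).Nonempty) :
    0 < w x (fsupp x) := by
  rw [w_eq_of_nonempty hne, Mx_fsupp hx, sub_zero]
  obtain ⟨u, hu, hiu⟩ := Finset.exists_mem_eq_inf' hne x
  have : 0 < (fsupp x).inf' hne x := by
    rw [hiu]
    exact lt_of_le_of_ne (hx u) (Ne.symm (mem_fsupp.1 hu))
  rw [max_eq_right (le_of_lt this)]
  exact this

lemma sdM_ne_iff {x : Fin n → ℝ} {F : Finset (Fin n)} : sdM x F ≠ 0 ↔ w x F ≠ 0 := by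
  unfold sdM
  constructor
  · intro h hw
    rw [hw, mul_zero] at h
    exact h rfl
  · intro hw h
    obtain ⟨hne, _, _, _⟩ := w_ne_zero_char hw
    have hc : ((F.card : ℝ)) ≠ 0 := by
      simp only [ne_eq, Nat.cast_eq_zero, Finset.card_eq_zero]
      exact hne.ne_empty
    exact hw (by
      rcases mul_eq_zero.1 h with h' | h'
      · exact absurd h' hc
      · exact h')

lemma chainy_sdM {x : Fin n → ℝ} : Chainy (sdM x) := by
  refine ⟨sdM_nonneg x, fun F hF => ?_, fun F G hF hG => ?_⟩
  · obtain ⟨hne, _, _, _⟩ := w_ne_zero_char (sdM_ne_iff.1 hF)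
    exact hne
  · exact w_chain (sdM_ne_iff.1 hF) (sdM_ne_iff.1 hG)

/-! ### the map f -/

noncomputable def Nx (S : Set (Finset (Fin n))) (x : Fin n → ℝ) : ℝ :=
  ∑ F ∈ univ.filter (fun F => F ∉ S), sdM x F

noncomputable def fdef (S : Set (Finset (Fin n))) (x : Fin n → ℝ) : Finset (Fin n) → ℝ :=
  fun F => if F ∈ S then 0 else sdM x F / Nx S x

lemma Nx_pos {S : Set (Finset (Fin n))} {x : Fin n → ℝ} (hx : ∀ v, 0 ≤ x v)
    (hne : (fsupp x).Nonempty) (hS : fsupp x ∉ S) : 0 < Nx S x := by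
  apply Finset.sum_pos' (fun F _ => sdM_nonneg x F)
  refine ⟨fsupp x, by simp [hS], ?_⟩
  unfold sdM
  have hc : (0:ℝ) < ((fsupp x).card : ℝ) := by exact_mod_cast Finset.card_pos.2 hne
  exact mul_pos hc (w_fsupp_pos hx hne)

lemma fdef_nonneg {S : Set (Finset (Fin n))} {x : Fin n → ℝ} (hx : ∀ v, 0 ≤ x v)
    (hne : (fsupp x).Nonempty) (hS : fsupp x ∉ S) (F : Finset (Fin n)) : 0 ≤ fdef S x F := by
  unfold fdef
  split
  · exact le_rfl
  · exact div_nonneg (sdM_nonneg x F) (le_of_lt (Nx_pos hx hne hS))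

lemma fdef_ne_iff {S : Set (Finset (Fin n))} {x : Fin n → ℝ} (hx : ∀ v, 0 ≤ x v)
    (hne : (fsupp x).Nonempty) (hS : fsupp x ∉ S) {F : Finset (Fin n)} :
    fdef S x F ≠ 0 ↔ F ∉ S ∧ sdM x F ≠ 0 := by
  unfold fdef
  by_cases hFS : F ∈ S
  · simp [hFS]
  · rw [if_neg hFS, div_ne_zero_iff]
    constructor
    · exact fun h => ⟨hFS, h.1⟩
    · exact fun h => ⟨h.2, ne_of_gt (Nx_pos hx hne hS)⟩

lemma sum_fdef {S : Set (Finset (Fin n))} {x : Fin n → ℝ} (hx : ∀ v, 0 ≤ x v)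
    (hne : (fsupp x).Nonempty) (hS : fsupp x ∉ S) :
    ∑ F : Finset (Fin n), fdef S x F = 1 := by
  unfold fdef
  rw [Finset.sum_ite, Finset.sum_const_zero, zero_add, ← Finset.sum_div]
  rw [div_eq_one_iff_eq (ne_of_gt (Nx_pos hx hne hS))]
  rfl

lemma fdef_mem {Δ S : Set (Finset (Fin n))} (hΔ : IsComplex Δ) {x : Fin n → ℝ}
    (hx : ∀ v, 0 ≤ x v) (hsum : ∑ v, x v = 1) (hΔs : fsupp x ∈ Δ) (hSs : fsupp x ∉ S) :
    fdef S x ∈ realize (SdMinus Δ S) := by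
  have hne : (fsupp x).Nonempty := fsupp_nonempty hsum
  rw [realize_iff (isComplex_sdMinus (Δ := Δ) (S := S))]
  refine ⟨fdef_nonneg hx hne hSs, ?_, sum_fdef hx hne hSs⟩
  have hmem : ∀ F ∈ fsupp (fdef S x), (F ∉ S ∧ sdM x F ≠ 0) := by
    intro F hF
    exact (fdef_ne_iff hx hne hSs).1 (mem_fsupp.1 hF)
  refine ⟨⟨fun F hF => ?_, fun F hF G hG => ?_⟩, fun F hF => (hmem F hF).1⟩
  · obtain ⟨hFS, hsd⟩ := hmem F hF
    have hw := sdM_ne_iff.1 hsd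
    obtain ⟨hne', _, _, _⟩ := w_ne_zero_char hw
    exact ⟨hΔ _ hΔs F (w_subset_fsupp hw), hne'⟩
  · exact w_chain (sdM_ne_iff.1 (hmem F hF).2) (sdM_ne_iff.1 (hmem G hG).2)

/-! ### the map g -/

lemma p_facts {Δ S : Set (Finset (Fin n))} {p : Finset (Fin n) → ℝ}
    (hp : p ∈ realize (SdMinus Δ S)) :
    Chainy p ∧ (∑ F, p F = 1) ∧ (∀ F, p F ≠ 0 → F ∈ Δ ∧ F.Nonempty ∧ F ∉ S) := by
  obtain ⟨h0, hC, hsum⟩ := (realize_iff (isComplex_sdMinus (Δ := Δ) (S := S))).1 hp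
  obtain ⟨⟨h1, h2⟩, h3⟩ := hC
  refine ⟨⟨h0, fun F hF => (h1 F (mem_fsupp.2 hF)).2,
    fun F G hF hG => h2 F (mem_fsupp.2 hF) G (mem_fsupp.2 hG)⟩, hsum, fun F hF => ?_⟩
  exact ⟨(h1 F (mem_fsupp.2 hF)).1, (h1 F (mem_fsupp.2 hF)).2, h3 F (mem_fsupp.2 hF)⟩

lemma fsupp_gmap {p : Finset (Fin n) → ℝ} (hc : Chainy p) {M : Finset (Fin n)}
    (hM : p M ≠ 0) (hmax : ∀ F, p F ≠ 0 → F ⊆ M) : fsupp (gmap p) = M := by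
  ext v
  rw [mem_fsupp]
  constructor
  · intro hv
    by_contra hvM
    exact hv (gmap_zero hmax hvM)
  · intro hv
    exact ne_of_gt (gmap_pos hc.1 hM hv)

lemma gmap_mem {Δ : Set (Finset (Fin n))} (hΔ : IsComplex Δ) {p : Finset (Fin n) → ℝ}
    (hc : Chainy p) (hsum : ∑ F, p F = 1) (hfaces : ∀ F, p F ≠ 0 → F ∈ Δ) :
    gmap p ∈ realize Δ := by
  obtain ⟨M, hM, hmax⟩ := exists_max_face hc (fsupp_nonempty hsum)
  rw [realize_iff hΔ]
  refine ⟨gmap_nonneg hc.1, ?_, ?_⟩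
  · rw [fsupp_gmap hc hM hmax]
    exact hfaces M hM
  · rw [gmap_sum hc.2.1]
    exact hsum

/-! ### continuity -/

lemma cont_inf' : ∀ (F : Finset (Fin n)) (h : F.Nonempty),
    Continuous fun x : Fin n → ℝ => F.inf' h x := by
  intro F
  induction F using Finset.cons_induction with
  | empty => intro h; exact absurd h (by simp)
  | cons a s ha ih =>
    intro h
    rcases s.eq_empty_or_nonempty with rfl | hs
    · have : (fun x : Fin n → ℝ => (Finset.cons a ∅ ha).inf' h x) = fun x => x a := by
        funext x
        simp
      rw [this]
      exact continuous_apply a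
    · have : (fun x : Fin n → ℝ => (Finset.cons a s ha).inf' h x)
          = fun x => min (x a) (s.inf' hs x) := by
        funext x
        exact Finset.inf'_cons hs x
      rw [this]
      exact (continuous_apply a).min (ih hs)

lemma cont_fold : ∀ (s : Finset (Fin n)), Continuous fun x : Fin n → ℝ => s.fold max 0 x := by
  intro s
  induction s using Finset.cons_induction with
  | empty => simpa using continuous_const
  | cons a s ha ih =>
    have : (fun x : Fin n → ℝ => (Finset.cons a s ha).fold max 0 x)
        = fun x => max (x a) (s.fold max 0 x) := by
      funext x
      exact Finset.fold_cons ha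
    rw [this]
    exact (continuous_apply a).max ih

lemma cont_w (F : Finset (Fin n)) : Continuous fun x : Fin n → ℝ => w x F := by
  rcases F.eq_empty_or_nonempty with rfl | h
  · have : (fun x : Fin n → ℝ => w x ∅) = fun _ => 0 := by
      funext x
      simp [w]
    rw [this]
    exact continuous_const
  · have : (fun x : Fin n → ℝ => w x F) = fun x => max 0 (F.inf' h x - Fᶜ.fold max 0 x) := by
      funext x
      exact dif_pos h
    rw [this]
    exact continuous_const.max ((cont_inf' F h).sub (cont_fold Fᶜ))

lemma cont_sdM (F : Finset (Fin n)) : Continuous fun x : Fin n → ℝ => sdM x F :=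
  continuous_const.mul (cont_w F)

lemma cont_Nx (S : Set (Finset (Fin n))) : Continuous (Nx S) := by
  unfold Nx
  exact continuous_finset_sum _ (fun F _ => cont_sdM F)

end PHES

open PHES

/-- Let `Δ` be a simplicial complex with subcomplexes `Δ'` and `Σ`. Then the pair
`(|Δ| - |Σ|, |Δ'| - |Σ|)` is homotopy equivalent as a pair to
`(|Sd(Δ - Σ)|, |Sd(Δ' - Σ)|)`. -/
theorem pair_homotopyEquiv_sdMinus {n : ℕ} (Δ Δ' S : Set (Finset (Fin n)))
    (hΔ : IsComplex Δ) (hΔ' : IsComplex Δ') (hS : IsComplex S)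
    (hle' : Δ' ⊆ Δ) (hleS : S ⊆ Δ) :
    IsPairHomotopyEquiv
      (X := (realize Δ \ realize S : Set (Fin n → ℝ)))
      (Y := (realize (SdMinus Δ S) : Set (Finset (Fin n) → ℝ)))
      {x | x.val ∈ realize Δ'} {y | y.val ∈ realize (SdMinus Δ' S)} := by
  classical
  have xfacts : ∀ x : Fin n → ℝ, x ∈ realize Δ \ realize S →
      (∀ v, 0 ≤ x v) ∧ fsupp x ∈ Δ ∧ (∑ v, x v = 1) ∧ fsupp x ∉ S := by
    rintro x ⟨hX, hXS⟩
    obtain ⟨h0, hF, hsum⟩ := (realize_iff hΔ).1 hX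
    exact ⟨h0, hF, hsum, fun hFS => hXS ((realize_iff hS).2 ⟨h0, hFS, hsum⟩)⟩
  have fmem : ∀ x ∈ realize Δ \ realize S, fdef S x ∈ realize (SdMinus Δ S) := by
    intro x hx
    obtain ⟨h0, hF, hsum, hFS⟩ := xfacts x hx
    exact fdef_mem hΔ h0 hsum hF hFS
  have fmemA : ∀ x ∈ realize Δ \ realize S, x ∈ realize Δ' →
      fdef S x ∈ realize (SdMinus Δ' S) := by
    intro x hx hx'
    obtain ⟨h0, _, hsum, hFS⟩ := xfacts x hx
    obtain ⟨_, hF', _⟩ := (realize_iff hΔ').1 hx'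
    exact fdef_mem hΔ' h0 hsum hF' hFS
  have gmem : ∀ p, p ∈ realize (SdMinus Δ S) → gmap p ∈ realize Δ \ realize S := by
    intro p hp
    obtain ⟨hc, hsum, hfaces⟩ := p_facts (Δ := Δ) (S := S) hp
    obtain ⟨M, hM, hmax⟩ := exists_max_face hc (fsupp_nonempty hsum)
    constructor
    · exact gmap_mem hΔ hc hsum (fun F hF => (hfaces F hF).1)
    · intro hgS
      obtain ⟨_, hFS, _⟩ := (realize_iff hS).1 hgS
      rw [fsupp_gmap hc hM hmax] at hFS
      exact (hfaces M hM).2.2 hFS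
  have gmemA : ∀ p, p ∈ realize (SdMinus Δ' S) → gmap p ∈ realize Δ' := by
    intro p hp
    obtain ⟨hc, hsum, hfaces⟩ := p_facts (Δ := Δ') (S := S) hp
    exact gmap_mem hΔ' hc hsum (fun F hF => (hfaces F hF).1)
  have fg : ∀ p, p ∈ realize (SdMinus Δ S) → fdef S (gmap p) = p := by
    intro p hp
    obtain ⟨hc, hsum, hfaces⟩ := p_facts (Δ := Δ) (S := S) hp
    have hx := gmem p hp
    obtain ⟨h0, hFΔ, hxsum, hFS⟩ := xfacts _ hx
    have hsd : sdM (gmap p) = p := by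
      apply gmap_inj ((fsupp (sdM (gmap p))).card + (fsupp p).card) _ _ le_rfl chainy_sdM hc
      rw [gmap_sdM (gmap p) h0]
    have hpS : ∀ F, F ∈ S → p F = 0 := by
      intro F hF
      by_contra h
      exact (hfaces F h).2.2 hF
    have hNx : Nx S (gmap p) = 1 := by
      unfold Nx
      rw [hsd, ← hsum]
      apply Finset.sum_subset (Finset.filter_subset _ _)
      intro F _ hF
      simp only [Finset.mem_filter, Finset.mem_univ, true_and, not_not] at hF
      exact hpS F hF
    funext F
    unfold fdef
    by_cases hFS' : F ∈ S
    · rw [if_pos hFS']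
      exact (hpS F hFS').symm
    · rw [if_neg hFS', hsd, hNx, div_one]
  -- the straight-line homotopy stays in X and in A
  have zmem : ∀ (t : ℝ), 0 ≤ t → t ≤ 1 → ∀ x ∈ realize Δ \ realize S,
      ((fun v => (1 - t) * gmap (fdef S x) v + t * x v) ∈ realize Δ \ realize S) ∧
      (x ∈ realize Δ' → (fun v => (1 - t) * gmap (fdef S x) v + t * x v) ∈ realize Δ') := by
    intro t ht0 ht1 x hx
    obtain ⟨h0, hFΔ, hsum, hFS⟩ := xfacts x hx
    have hne : (fsupp x).Nonempty := fsupp_nonempty hsum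
    have hp := fmem x hx
    obtain ⟨hc, hpsum, hfaces⟩ := p_facts (Δ := Δ) (S := S) hp
    have hpM : fdef S x (fsupp x) ≠ 0 := by
      rw [fdef_ne_iff h0 hne hFS]
      exact ⟨hFS, sdM_ne_iff.2 (ne_of_gt (w_fsupp_pos h0 hne))⟩
    have hpmax : ∀ F, fdef S x F ≠ 0 → F ⊆ fsupp x := by
      intro F hF
      exact w_subset_fsupp (sdM_ne_iff.1 ((fdef_ne_iff h0 hne hFS).1 hF).2)
    set y := gmap (fdef S x) with hy
    set z := (fun v => (1 - t) * y v + t * x v) with hzdef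
    have hz0 : ∀ v, 0 ≤ z v := by
      intro v
      have h1 := gmap_nonneg hc.1 (p := fdef S x) v
      have h2 := h0 v
      show 0 ≤ (1 - t) * y v + t * x v
      nlinarith
    have hzsupp : fsupp z = fsupp x := by
      ext v
      rw [mem_fsupp, mem_fsupp]
      constructor
      · intro hv
        by_contra hvx
        have hvm : v ∉ fsupp x := fun h => (mem_fsupp.1 h) hvx
        have hyv : y v = 0 := gmap_zero hpmax hvm
        apply hv
        show (1 - t) * y v + t * x v = 0
        rw [hyv, hvx]
        ring
      · intro hv
        have hyv : 0 < y v := gmap_pos hc.1 hpM (mem_fsupp.2 hv)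
        have hxv : 0 < x v := lt_of_le_of_ne (h0 v) (Ne.symm hv)
        show (1 - t) * y v + t * x v ≠ 0
        rcases eq_or_lt_of_le ht1 with rfl | ht1'
        · simpa using hv
        · exact ne_of_gt (by nlinarith)
    have hzsum : ∑ v, z v = 1 := by
      have hysum : ∑ v, y v = 1 := by
        rw [hy, gmap_sum hc.2.1]
        exact sum_fdef h0 hne hFS
      show ∑ v, ((1 - t) * y v + t * x v) = 1
      rw [Finset.sum_add_distrib, ← Finset.mul_sum, ← Finset.mul_sum, hysum, hsum]
      ring
    constructor
    · constructor
      · exact (realize_iff hΔ).2 ⟨hz0, by rw [hzsupp]; exact hFΔ, hzsum⟩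
      · intro hzS
        obtain ⟨_, hzFS, _⟩ := (realize_iff hS).1 hzS
        rw [hzsupp] at hzFS
        exact hFS hzFS
    · intro hx'
      obtain ⟨_, hF', _⟩ := (realize_iff hΔ').1 hx'
      exact (realize_iff hΔ').2 ⟨hz0, by rw [hzsupp]; exact hF', hzsum⟩
  -- continuity of the coordinates of f
  have hfdefcont : ∀ F : Finset (Fin n),
      Continuous fun x : (realize Δ \ realize S : Set (Fin n → ℝ)) => fdef S x.val F := by
    intro F
    by_cases hFS : F ∈ S
    · have : (fun x : (realize Δ \ realize S : Set (Fin n → ℝ)) => fdef S x.val F)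
          = fun _ => 0 := by
        funext x
        simp [fdef, hFS]
      rw [this]
      exact continuous_const
    · have : (fun x : (realize Δ \ realize S : Set (Fin n → ℝ)) => fdef S x.val F)
          = fun x => sdM x.val F / Nx S x.val := by
        funext x
        simp [fdef, hFS]
      rw [this]
      apply Continuous.div ((cont_sdM F).comp continuous_subtype_val)
        ((cont_Nx S).comp continuous_subtype_val)
      intro x
      obtain ⟨h0, _, hsum, hFS2⟩ := xfacts x.val x.2
      exact ne_of_gt (Nx_pos h0 (fsupp_nonempty hsum) hFS2)
  have hgmapcont : ∀ v : Fin n,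
      Continuous fun x : (realize Δ \ realize S : Set (Fin n → ℝ)) => gmap (fdef S x.val) v := by
    intro v
    unfold gmap
    exact continuous_finset_sum _ (fun F _ => (hfdefcont F).mul continuous_const)
  let fC : C((realize Δ \ realize S : Set (Fin n → ℝ)),
      (realize (SdMinus Δ S) : Set (Finset (Fin n) → ℝ))) :=
    ⟨fun x => ⟨fdef S x.val, fmem x.val x.2⟩,
      Continuous.subtype_mk (continuous_pi (fun F => hfdefcont F)) _⟩
  let gC : C((realize (SdMinus Δ S) : Set (Finset (Fin n) → ℝ)),
      (realize Δ \ realize S : Set (Fin n → ℝ))) :=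
    ⟨fun p => ⟨gmap p.val, gmem p.val p.2⟩, by
      apply Continuous.subtype_mk
      apply continuous_pi
      intro v
      unfold gmap
      exact continuous_finset_sum _
        (fun F _ => ((continuous_apply F).comp continuous_subtype_val).mul continuous_const)⟩
  refine ⟨fC, gC, ?_, ?_, ?_, ?_⟩
  · intro x hx
    exact fmemA x.val x.2 hx
  · intro p hp
    exact gmemA p.val hp
  · -- homotopy from g ∘ f to id
    refine ⟨⟨⟨⟨fun tx => ⟨fun v => (1 - tx.1.val) * gmap (fdef S tx.2.val) v + tx.1.val * tx.2.val v,
        (zmem tx.1.val tx.1.2.1 tx.1.2.2 tx.2.val tx.2.2).1⟩, ?_⟩, ?_, ?_⟩, ?_⟩⟩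
    · apply Continuous.subtype_mk
      apply continuous_pi
      intro v
      apply Continuous.add
      · exact (continuous_const.sub ((continuous_subtype_val).comp continuous_fst)).mul
          ((hgmapcont v).comp continuous_snd)
      · exact ((continuous_subtype_val).comp continuous_fst).mul
          ((continuous_apply v).comp (continuous_subtype_val.comp continuous_snd))
    · intro x
      apply Subtype.ext
      funext v
      show (1 - ((0 : unitInterval) : ℝ)) * gmap (fdef S x.val) v + ((0 : unitInterval) : ℝ) * x.val v
        = gmap (fdef S x.val) v
      norm_num
    · intro x
      apply Subtype.ext
      funext v
      show (1 - ((1 : unitInterval) : ℝ)) * gmap (fdef S x.val) v + ((1 : unitInterval) : ℝ) * x.val v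
        = x.val v
      norm_num
    · intro t x hx
      exact (zmem t.val t.2.1 t.2.2 x.val x.2).2 hx
  · -- f ∘ g = id
    refine ⟨?_⟩
    have heq : fC.comp gC = ContinuousMap.id _ := by
      apply ContinuousMap.ext
      intro p
      apply Subtype.ext
      show fdef S (gmap p.val) = p.val
      exact fg p.val p.2
    rw [heq]
    exact ContinuousMap.HomotopyWith.refl _ (fun y hy => hy)
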